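/- Let H be a separable Hilbert space and let A and B be self-adjoint operators in H with D(A) = D(B), each having pure point spectrum: there are orthonormal bases (ψ_n)_{n∈ℕ} and (φ_n)_{n∈ℕ} of H and real numbers (λ_n), (μ_n) with Aψ_n = λ_n ψ_n and Bφ_n = μ_n φ_n for all n. Let C be a bounded self-adjoint operator on H with Au = Bu + Cu for all u ∈ D(A). Let f : ℝ → (0, ∞) be a decreasing function such that f(A) and f(B) are trace class. Then tr(C·f(A)) − tr(C·f(B)) ≤ 0; equivalently, ∑_{n,m=1}^∞ (f(λ_n) − f(μ_m))·(λ_n − μ_m)·|(ψ_n, φ_m)|² ≤ 0. -/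

import Mathlib

open Filter Topology
open scoped ComplexInnerProductSpace

/-- **Antitonicity of the particle density (trace monotonicity).**
Let `H` be a separable Hilbert space and `A, B` self-adjoint operators with `D(A) = D(B)`,
each with pure point spectrum: orthonormal bases `(ψ_n)`, `(φ_m)` of `H` and reals `(λ_n)`,
`(μ_m)` with `A ψ_n = λ_n ψ_n`, `B φ_m = μ_m φ_m`.  Let `C` be a bounded self-adjoint operator
with `A u = B u + C u` on `D(A)`; in matrix elements, `⟪C ψ_n, φ_m⟫ = (λ_n - μ_m) ⟪ψ_n, φ_m⟫`.
Let `f : ℝ → (0, ∞)` be decreasing with `f(A)`, `f(B)` trace class, i.e. `∑ f(λ_n) < ∞` and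
`∑ f(μ_m) < ∞`.  Then `tr (C f(A)) - tr (C f(B)) ≤ 0`, where
`tr (C f(A)) = ∑_n f(λ_n) ⟪ψ_n, C ψ_n⟫`; equivalently,
`∑_{n,m} (f(λ_n) - f(μ_m)) (λ_n - μ_m) |⟪ψ_n, φ_m⟫|² ≤ 0`. -/
theorem trace_monotone_of_antitone
    {H : Type*} [NormedAddCommGroup H] [InnerProductSpace ℂ H] [CompleteSpace H]
    (ψ φ : HilbertBasis ℕ ℂ H) (lam mu : ℕ → ℝ)
    (C : H →L[ℂ] H) (hC : IsSelfAdjoint C)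
    -- `A u = B u + C u` on `D(A) = D(B)`, in matrix elements w.r.t. the eigenbases
    (hABC : ∀ n m : ℕ,
      ⟪C (ψ n), (φ m : H)⟫ = ((lam n : ℂ) - (mu m : ℂ)) * ⟪(ψ n : H), (φ m : H)⟫)
    (f : ℝ → ℝ) (hfpos : ∀ x : ℝ, 0 < f x) (hfanti : Antitone f)
    -- `f(A)` and `f(B)` are trace class
    (hfA : Summable fun n => f (lam n)) (hfB : Summable fun m => f (mu m)) :
    -- `tr (C f(A)) - tr (C f(B)) ≤ 0` ...
    ((∑' n, f (lam n) * (⟪(ψ n : H), C (ψ n)⟫).re) -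
        ∑' m, f (mu m) * (⟪(φ m : H), C (φ m)⟫).re ≤ 0) ∧
    -- ... equivalently, the double sum is nonpositive
    (∑' n, ∑' m, (f (lam n) - f (mu m)) * (lam n - mu m) * ‖⟪(ψ n : H), (φ m : H)⟫‖ ^ 2) ≤ 0 := by
  classical
  set g : ℕ → ℕ → ℝ := fun n m => (lam n - mu m) * ‖⟪(ψ n : H), (φ m : H)⟫‖ ^ 2 with hg
  have hsym : ∀ x y : H, ⟪C x, y⟫ = ⟪x, C y⟫ :=
    fun x y => (ContinuousLinearMap.isSelfAdjoint_iff_isSymmetric.mp hC) x y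
  -- row sums
  have hterm1 : ∀ n m, ⟪(ψ n : H), (φ m : H)⟫ * ⟪(φ m : H), C (ψ n)⟫ = ((g n m : ℝ) : ℂ) := by
    intro n m
    have h2 : ⟪(φ m : H), C (ψ n)⟫ = (starRingEnd ℂ) ⟪C (ψ n), (φ m : H)⟫ :=
      (inner_conj_symm _ _).symm
    rw [h2, hABC n m, map_mul]
    have : (starRingEnd ℂ) ((lam n : ℂ) - (mu m : ℂ)) = ((lam n : ℂ) - (mu m : ℂ)) := by
      simp [Complex.conj_ofReal]
    rw [this, hg]
    set z := ⟪(ψ n : H), (φ m : H)⟫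
    rw [mul_comm z, mul_assoc, mul_comm _ z, Complex.mul_conj, Complex.normSq_eq_norm_sq]
    push_cast
    ring
  have hterm2 : ∀ n m, ⟪(φ m : H), (ψ n : H)⟫ * ⟪(ψ n : H), C (φ m)⟫ = ((g n m : ℝ) : ℂ) := by
    intro n m
    have h2 : ⟪(φ m : H), (ψ n : H)⟫ = (starRingEnd ℂ) ⟪(ψ n : H), (φ m : H)⟫ :=
      (inner_conj_symm _ _).symm
    rw [h2, ← hsym, hABC n m, hg]
    set z := ⟪(ψ n : H), (φ m : H)⟫
    rw [mul_comm _ (((lam n : ℂ) - (mu m : ℂ)) * z), mul_assoc, Complex.mul_conj,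
      Complex.normSq_eq_norm_sq]
    push_cast
    ring
  have hA1 : ∀ n, HasSum (fun m => g n m) ((⟪(ψ n : H), C (ψ n)⟫).re) := by
    intro n
    have h := (φ.hasSum_inner_mul_inner (ψ n : H) (C (ψ n))).mapL Complex.reCLM
    simp only [Complex.reCLM_apply, hterm1 n, Complex.ofReal_re] at h
    exact h
  have hB1 : ∀ m, HasSum (fun n => g n m) ((⟪(φ m : H), C (φ m)⟫).re) := by
    intro m
    have h := (ψ.hasSum_inner_mul_inner (φ m : H) (C (φ m))).mapL Complex.reCLM
    simp only [Complex.reCLM_apply, hterm2, Complex.ofReal_re] at h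
    exact h
  -- norm computations
  have hnz1 : ∀ n m, ‖⟪(φ m : H), C (ψ n)⟫‖ = |lam n - mu m| * ‖⟪(ψ n : H), (φ m : H)⟫‖ := by
    intro n m
    rw [← inner_conj_symm, RCLike.norm_conj, hABC n m, norm_mul]
    congr 1
    rw [show ((lam n : ℂ) - (mu m : ℂ)) = ((lam n - mu m : ℝ) : ℂ) by push_cast; ring,
      Complex.norm_real, Real.norm_eq_abs]
  have hnz2 : ∀ n m, ‖⟪(ψ n : H), C (φ m)⟫‖ = |lam n - mu m| * ‖⟪(ψ n : H), (φ m : H)⟫‖ := by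
    intro n m
    rw [← hsym, hABC n m, norm_mul]
    congr 1
    rw [show ((lam n : ℂ) - (mu m : ℂ)) = ((lam n - mu m : ℝ) : ℂ) by push_cast; ring,
      Complex.norm_real, Real.norm_eq_abs]
  have habs : ∀ n m, |g n m| = |lam n - mu m| * ‖⟪(ψ n : H), (φ m : H)⟫‖ ^ 2 := by
    intro n m
    rw [hg, abs_mul, abs_of_nonneg (by positivity : (0:ℝ) ≤ ‖⟪(ψ n : H), (φ m : H)⟫‖ ^ 2)]
  -- AM-GM bound
  have hbd1 : ∀ n m, |g n m| ≤
      (‖⟪(φ m : H), (ψ n : H)⟫‖ ^ 2 + ‖⟪(φ m : H), C (ψ n)⟫‖ ^ 2) / 2 := by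
    intro n m
    rw [habs, hnz1 n m]
    rw [norm_inner_symm (ψ n : H) (φ m : H)]
    set a := ‖⟪(φ m : H), (ψ n : H)⟫‖
    set c := |lam n - mu m|
    nlinarith [sq_nonneg (a - c * a), sq_nonneg a, abs_nonneg (lam n - mu m)]
  have hbd2 : ∀ n m, |g n m| ≤
      (‖⟪(ψ n : H), (φ m : H)⟫‖ ^ 2 + ‖⟪(ψ n : H), C (φ m)⟫‖ ^ 2) / 2 := by
    intro n m
    rw [habs, hnz2 n m]
    set a := ‖⟪(ψ n : H), (φ m : H)⟫‖
    set c := |lam n - mu m|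
    nlinarith [sq_nonneg (a - c * a), sq_nonneg a, abs_nonneg (lam n - mu m)]
  set K : ℝ := (1 + ‖C‖ ^ 2) / 2 with hK
  -- row absolute summability and bounds
  have hrow : ∀ n, Summable (fun m => |g n m|) := by
    intro n
    refine Summable.of_nonneg_of_le (fun m => abs_nonneg _) (hbd1 n) ?_
    exact ((Orthonormal.inner_products_summable _ φ.orthonormal).add
      (Orthonormal.inner_products_summable _ φ.orthonormal)).div_const 2
  have hrow_bd : ∀ n, ∑' m, |g n m| ≤ K := by
    intro n
    have h1 : ∑' m, |g n m| ≤
        ∑' m, (‖⟪(φ m : H), (ψ n : H)⟫‖ ^ 2 + ‖⟪(φ m : H), C (ψ n)⟫‖ ^ 2) / 2 := by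
      refine Summable.tsum_le_tsum (hbd1 n) (hrow n) ?_
      exact ((Orthonormal.inner_products_summable _ φ.orthonormal).add
        (Orthonormal.inner_products_summable _ φ.orthonormal)).div_const 2
    have h2 : ∑' m, (‖⟪(φ m : H), (ψ n : H)⟫‖ ^ 2 + ‖⟪(φ m : H), C (ψ n)⟫‖ ^ 2) / 2
        = ((∑' m, ‖⟪(φ m : H), (ψ n : H)⟫‖ ^ 2) + ∑' m, ‖⟪(φ m : H), C (ψ n)⟫‖ ^ 2) / 2 := by
      rw [tsum_div_const, Summable.tsum_add (Orthonormal.inner_products_summable _ φ.orthonormal)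
        (Orthonormal.inner_products_summable _ φ.orthonormal)]
    have h3 : ∑' m, ‖⟪(φ m : H), (ψ n : H)⟫‖ ^ 2 ≤ 1 := by
      have := φ.orthonormal.tsum_inner_products_le (ψ n : H)
      simpa [ψ.orthonormal.1 n] using this
    have h4 : ∑' m, ‖⟪(φ m : H), C (ψ n)⟫‖ ^ 2 ≤ ‖C‖ ^ 2 := by
      refine (φ.orthonormal.tsum_inner_products_le (C (ψ n))).trans ?_
      have h5 : ‖C (ψ n)‖ ≤ ‖C‖ := by
        calc ‖C (ψ n)‖ ≤ ‖C‖ * ‖(ψ n : H)‖ := C.le_opNorm _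
        _ = ‖C‖ := by rw [ψ.orthonormal.1 n, mul_one]
      exact pow_le_pow_left₀ (norm_nonneg _) h5 2
    rw [h2] at h1
    rw [hK]
    linarith
  have hcol : ∀ m, Summable (fun n => |g n m|) := by
    intro m
    refine Summable.of_nonneg_of_le (fun n => abs_nonneg _) (hbd2 · m) ?_
    exact ((Orthonormal.inner_products_summable _ ψ.orthonormal).add
      (Orthonormal.inner_products_summable _ ψ.orthonormal)).div_const 2
  have hcol_bd : ∀ m, ∑' n, |g n m| ≤ K := by
    intro m
    have h1 : ∑' n, |g n m| ≤
        ∑' n, (‖⟪(ψ n : H), (φ m : H)⟫‖ ^ 2 + ‖⟪(ψ n : H), C (φ m)⟫‖ ^ 2) / 2 := by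
      refine Summable.tsum_le_tsum (hbd2 · m) (hcol m) ?_
      exact ((Orthonormal.inner_products_summable _ ψ.orthonormal).add
        (Orthonormal.inner_products_summable _ ψ.orthonormal)).div_const 2
    have h2 : ∑' n, (‖⟪(ψ n : H), (φ m : H)⟫‖ ^ 2 + ‖⟪(ψ n : H), C (φ m)⟫‖ ^ 2) / 2
        = ((∑' n, ‖⟪(ψ n : H), (φ m : H)⟫‖ ^ 2) + ∑' n, ‖⟪(ψ n : H), C (φ m)⟫‖ ^ 2) / 2 := by
      rw [tsum_div_const, Summable.tsum_add (Orthonormal.inner_products_summable _ ψ.orthonormal)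
        (Orthonormal.inner_products_summable _ ψ.orthonormal)]
    have h3 : ∑' n, ‖⟪(ψ n : H), (φ m : H)⟫‖ ^ 2 ≤ 1 := by
      have := ψ.orthonormal.tsum_inner_products_le (φ m : H)
      simpa [φ.orthonormal.1 m] using this
    have h4 : ∑' n, ‖⟪(ψ n : H), C (φ m)⟫‖ ^ 2 ≤ ‖C‖ ^ 2 := by
      refine (ψ.orthonormal.tsum_inner_products_le (C (φ m))).trans ?_
      have h5 : ‖C (φ m)‖ ≤ ‖C‖ := by
        calc ‖C (φ m)‖ ≤ ‖C‖ * ‖(φ m : H)‖ := C.le_opNorm _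
        _ = ‖C‖ := by rw [φ.orthonormal.1 m, mul_one]
      exact pow_le_pow_left₀ (norm_nonneg _) h5 2
    rw [h2] at h1
    rw [hK]
    linarith
  have hKnn : (0:ℝ) ≤ K := by positivity
  -- summability of the double family F
  have hFa : Summable (fun p : ℕ × ℕ => |f (lam p.1) * g p.1 p.2|) := by
    refine (summable_prod_of_nonneg (fun p => abs_nonneg _)).mpr ⟨fun n => ?_, ?_⟩
    · simp only [abs_mul, abs_of_pos (hfpos _)]
      exact (hrow n).mul_left _
    · refine Summable.of_nonneg_of_le (fun n => tsum_nonneg fun m => abs_nonneg _)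
        (fun n => ?_) (hfA.mul_right K)
      calc ∑' m, |f (lam n) * g n m| = f (lam n) * ∑' m, |g n m| := by
            simp only [abs_mul, abs_of_pos (hfpos _)]; exact tsum_mul_left
        _ ≤ f (lam n) * K := by
            exact mul_le_mul_of_nonneg_left (hrow_bd n) (hfpos _).le
  have hF : Summable (fun p : ℕ × ℕ => f (lam p.1) * g p.1 p.2) := summable_abs_iff.mp hFa
  -- summability of the double family G (indexed with m first)
  have hGa : Summable (fun q : ℕ × ℕ => |f (mu q.1) * g q.2 q.1|) := by
    refine (summable_prod_of_nonneg (fun q => abs_nonneg _)).mpr ⟨fun m => ?_, ?_⟩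
    · simp only [abs_mul, abs_of_pos (hfpos _)]
      exact (hcol m).mul_left _
    · refine Summable.of_nonneg_of_le (fun m => tsum_nonneg fun n => abs_nonneg _)
        (fun m => ?_) (hfB.mul_right K)
      calc ∑' n, |f (mu m) * g n m| = f (mu m) * ∑' n, |g n m| := by
            simp only [abs_mul, abs_of_pos (hfpos _)]; exact tsum_mul_left
        _ ≤ f (mu m) * K := by
            exact mul_le_mul_of_nonneg_left (hcol_bd m) (hfpos _).le
  have hG : Summable (fun q : ℕ × ℕ => f (mu q.1) * g q.2 q.1) := summable_abs_iff.mp hGa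
  have hG' : Summable (fun p : ℕ × ℕ => f (mu p.2) * g p.1 p.2) :=
    ((Equiv.prodComm ℕ ℕ).summable_iff).mpr hG
  -- identify the single sums with double sums
  have hS1 : (∑' n, f (lam n) * (⟪(ψ n : H), C (ψ n)⟫).re)
      = ∑' p : ℕ × ℕ, f (lam p.1) * g p.1 p.2 := by
    rw [Summable.tsum_prod hF]
    refine tsum_congr fun n => ?_
    simp only [tsum_mul_left]
    rw [(hA1 n).tsum_eq]
  have hS2 : (∑' m, f (mu m) * (⟪(φ m : H), C (φ m)⟫).re)
      = ∑' p : ℕ × ℕ, f (mu p.2) * g p.1 p.2 := by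
    have e1 : (∑' p : ℕ × ℕ, f (mu p.2) * g p.1 p.2)
        = ∑' q : ℕ × ℕ, f (mu q.1) * g q.2 q.1 :=
      (Equiv.prodComm ℕ ℕ).tsum_eq fun q : ℕ × ℕ => f (mu q.1) * g q.2 q.1
    rw [e1, Summable.tsum_prod hG]
    refine tsum_congr fun m => ?_
    simp only [tsum_mul_left]
    rw [(hB1 m).tsum_eq]
  -- sign of each term
  have hsign : ∀ n m, (f (lam n) - f (mu m)) * g n m ≤ 0 := by
    intro n m
    rcases le_total (lam n) (mu m) with h | h
    · refine mul_nonpos_of_nonneg_of_nonpos (by linarith [hfanti h]) ?_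
      exact mul_nonpos_of_nonpos_of_nonneg (by linarith) (by positivity)
    · refine mul_nonpos_of_nonpos_of_nonneg (by linarith [hfanti h]) ?_
      exact mul_nonneg (by linarith) (by positivity)
  constructor
  · rw [hS1, hS2, ← Summable.tsum_sub hF hG']
    refine tsum_nonpos fun p => ?_
    have h := hsign p.1 p.2
    nlinarith [h]
  · refine tsum_nonpos fun n => tsum_nonpos fun m => ?_
    have hs : (0:ℝ) ≤ ‖⟪(ψ n : H), (φ m : H)⟫‖ ^ 2 := by positivity
    rcases le_total (lam n) (mu m) with h | h
    · exact mul_nonpos_of_nonpos_of_nonneg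
        (mul_nonpos_of_nonneg_of_nonpos (by linarith [hfanti h]) (by linarith)) hs
    · exact mul_nonpos_of_nonpos_of_nonneg
        (mul_nonpos_of_nonpos_of_nonneg (by linarith [hfanti h]) (by linarith)) hs
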